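/- Suppose E[exp(α S'_n) 1_{τ > n}] ≤ K ρ^{-n} for all n ≥ 0, where K < ∞, ρ > 1, and α ≥ 1. If additionally E[|B|^α] < ∞ for an i.i.d. sequence (B_n) independent of (S'_n, τ), then E[(|B_0| + Σ_{n=1}^∞ e^{S'_{n-1}} |B_n| 1_{τ > n})^α] < ∞. -/

import Mathlib

open MeasureTheory ProbabilityTheory

set_option maxHeartbeats 1000000 in
theorem moment_bound_from_geometric_decay {Ω : Type*} [MeasurableSpace Ω]
    (μ : Measure Ω) [IsProbabilityMeasure μ]
    (S' : ℕ → Ω → ℝ) (B : ℕ → Ω → ℝ) (τ : Ω → ℕ)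
    (hSmeas : ∀ n, Measurable (S' n)) (hBmeas : ∀ n, Measurable (B n))
    (hτmeas : Measurable τ) (hτ : ∀ ω, 1 ≤ τ ω)
    (K ρ α : ℝ) (hρ : 1 < ρ) (hα : 1 ≤ α)
    (hdecay : ∀ n : ℕ, ∫⁻ ω in {ω | n < τ ω},
        ENNReal.ofReal (Real.exp (α * S' n ω)) ∂μ ≤
      ENNReal.ofReal (K * ρ ^ (-(n : ℝ))))
    (hBiid : iIndepFun B μ)
    (hBident : ∀ n, IdentDistrib (B n) (B 0) μ μ)
    (hBindep : IndepFun (fun ω => fun n => B n ω)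
      (fun ω => ((fun n => S' n ω), τ ω)) μ)
    (hBmom : ∫⁻ ω, ENNReal.ofReal (|B 0 ω| ^ α) ∂μ < ⊤) :
    ∫⁻ ω, ENNReal.ofReal
      ((|B 0 ω| + ∑' n : ℕ,
          (if n + 1 < τ ω then Real.exp (S' n ω) * |B (n + 1) ω| else 0)) ^ α)
      ∂μ < ⊤ := by
  have hαpos : (0:ℝ) < α := lt_of_lt_of_le zero_lt_one hα
  have hαne : α ≠ 0 := hαpos.ne'
  have hinvα : (0:ℝ) < 1 / α := by positivity
  have hρ0 : (0:ℝ) < ρ := lt_trans zero_lt_one hρ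
  -- the terms
  set term : ℕ → Ω → ℝ := fun n ω =>
    if n + 1 < τ ω then Real.exp (S' n ω) * |B (n + 1) ω| else 0 with hterm
  have hterm_nonneg : ∀ n ω, 0 ≤ term n ω := by
    intro n ω
    simp only [hterm]
    split
    · positivity
    · exact le_rfl
  set G0 : Ω → ENNReal := fun ω => ENNReal.ofReal (|B 0 ω|) with hG0
  set Gs : ℕ → Ω → ENNReal := fun n ω => ENNReal.ofReal (term n ω) with hGs
  have hτset : ∀ n : ℕ, MeasurableSet {ω | n < τ ω} := by
    intro n
    exact hτmeas (by trivial : MeasurableSet {m : ℕ | n < m})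
  have hG0meas : Measurable G0 := ((hBmeas 0).abs).ennreal_ofReal
  have hGsmeas : ∀ n, Measurable (Gs n) := by
    intro n
    have : Measurable (term n) := by
      apply Measurable.ite (hτset (n + 1))
      · exact ((hSmeas n).exp.mul (hBmeas (n + 1)).abs)
      · exact measurable_const
    exact this.ennreal_ofReal
  -- pointwise bound
  have hpointwise : ∀ ω,
      ENNReal.ofReal ((|B 0 ω| + ∑' n : ℕ, term n ω) ^ α) ≤
        (G0 ω + ∑' n, Gs n ω) ^ α := by
    intro ω
    have ht0 : 0 ≤ ∑' n, term n ω := tsum_nonneg (fun n => hterm_nonneg n ω)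
    have habs : (0:ℝ) ≤ |B 0 ω| := abs_nonneg _
    rw [← ENNReal.ofReal_rpow_of_nonneg (by positivity) hαpos.le]
    apply ENNReal.rpow_le_rpow _ hαpos.le
    calc ENNReal.ofReal (|B 0 ω| + ∑' n, term n ω)
        ≤ ENNReal.ofReal (|B 0 ω|) + ENNReal.ofReal (∑' n, term n ω) :=
          ENNReal.ofReal_add_le
      _ ≤ G0 ω + ∑' n, Gs n ω := by
          apply add_le_add_right
          by_cases hs : Summable (fun n => term n ω)
          · rw [ENNReal.ofReal_tsum_of_nonneg (fun n => hterm_nonneg n ω) hs]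
          · rw [tsum_eq_zero_of_not_summable hs]
            simp
  -- the key integral quantities
  set M : ENNReal := ∫⁻ ω, ENNReal.ofReal (|B 0 ω| ^ α) ∂μ with hM
  set K' : ℝ := max K 0 with hK'
  have hK'0 : (0:ℝ) ≤ K' := le_max_right _ _
  -- moment of |B n| equals M
  have hBmomn : ∀ n : ℕ, ∫⁻ ω, ENNReal.ofReal (|B n ω| ^ α) ∂μ = M := by
    intro n
    have hmeas : Measurable (fun x : ℝ => ENNReal.ofReal (|x| ^ α)) := by
      exact ((Real.continuous_rpow_const hαpos.le).measurable.comp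
        continuous_abs.measurable).ennreal_ofReal
    exact ((hBident n).comp hmeas).lintegral_eq
  -- integral of G0 ^ α
  have hG0int : ∫⁻ ω, (G0 ω) ^ α ∂μ = M := by
    rw [← hBmomn 0]
    apply lintegral_congr
    intro ω
    rw [hG0, ENNReal.ofReal_rpow_of_nonneg (abs_nonneg _) hαpos.le]
  -- integral of Gs n ^ α
  have hGint : ∀ n : ℕ, ∫⁻ ω, (Gs n ω) ^ α ∂μ ≤
      (ENNReal.ofReal K' * ENNReal.ofReal (ρ ^ (-(n : ℝ)))) * M := by
    intro n
    -- rewrite the integrand as a product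
    have hrw : ∀ ω, (Gs n ω) ^ α =
        (if n + 1 < τ ω then ENNReal.ofReal (Real.exp (α * S' n ω)) else 0) *
          ENNReal.ofReal (|B (n + 1) ω| ^ α) := by
      intro ω
      rw [hGs, ENNReal.ofReal_rpow_of_nonneg (hterm_nonneg n ω) hαpos.le]
      simp only [hterm]
      split
      · rw [Real.mul_rpow (Real.exp_nonneg _) (abs_nonneg _), ← Real.exp_mul,
          mul_comm (S' n ω) α, ENNReal.ofReal_mul (Real.exp_nonneg _)]
      · simp [Real.zero_rpow hαne]
    -- independence
    set f : Ω → ENNReal := fun ω =>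
      if n + 1 < τ ω then ENNReal.ofReal (Real.exp (α * S' n ω)) else 0 with hf
    set g : Ω → ENNReal := fun ω => ENNReal.ofReal (|B (n + 1) ω| ^ α) with hg
    have hfmeas : Measurable f := by
      apply Measurable.ite (hτset (n + 1))
      · exact (((hSmeas n).const_mul α).exp).ennreal_ofReal
      · exact measurable_const
    have hgmeas : Measurable g := by
      exact ((Real.continuous_rpow_const hαpos.le).measurable.comp
        (hBmeas (n + 1)).abs).ennreal_ofReal
    have hφmeas : Measurable (fun p : (ℕ → ℝ) × ℕ =>
        if n + 1 < p.2 then ENNReal.ofReal (Real.exp (α * p.1 n)) else 0) := by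
      apply Measurable.ite
      · exact measurable_snd (by trivial : MeasurableSet {m : ℕ | n + 1 < m})
      · exact (((Measurable.const_mul (f := fun x : (ℕ → ℝ) × ℕ => x.1 n) ((measurable_pi_apply n).comp measurable_fst) α)).exp).ennreal_ofReal
      · exact measurable_const
    have hψmeas : Measurable (fun b : ℕ → ℝ => ENNReal.ofReal (|b (n + 1)| ^ α)) := by
      exact ((Real.continuous_rpow_const hαpos.le).measurable.comp
        (measurable_pi_apply (n + 1)).abs).ennreal_ofReal
    have hindep : IndepFun g f μ := by
      have := hBindep.comp hψmeas hφmeas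
      exact this
    have hmul : ∫⁻ ω, f ω * g ω ∂μ = (∫⁻ ω, f ω ∂μ) * ∫⁻ ω, g ω ∂μ := by
      rw [mul_comm]
      calc ∫⁻ ω, f ω * g ω ∂μ = ∫⁻ ω, g ω * f ω ∂μ := by
            apply lintegral_congr; intro ω; ring
        _ = (∫⁻ ω, g ω ∂μ) * ∫⁻ ω, f ω ∂μ :=
            lintegral_mul_eq_lintegral_mul_lintegral_of_indepFun''
              hgmeas.aemeasurable hfmeas.aemeasurable hindep
    have hfint : ∫⁻ ω, f ω ∂μ ≤ ENNReal.ofReal K' * ENNReal.ofReal (ρ ^ (-(n : ℝ))) := by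
      have h1 : ∫⁻ ω, f ω ∂μ =
          ∫⁻ ω in {ω | n + 1 < τ ω}, ENNReal.ofReal (Real.exp (α * S' n ω)) ∂μ := by
        rw [← lintegral_indicator (hτset (n + 1))]
        apply lintegral_congr
        intro ω
        simp [hf, Set.indicator_apply, Set.mem_setOf_eq]
      rw [h1]
      calc ∫⁻ ω in {ω | n + 1 < τ ω}, ENNReal.ofReal (Real.exp (α * S' n ω)) ∂μ
          ≤ ∫⁻ ω in {ω | n < τ ω}, ENNReal.ofReal (Real.exp (α * S' n ω)) ∂μ := by
            apply lintegral_mono_set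
            intro ω hω
            exact lt_trans (Nat.lt_succ_self n) hω
        _ ≤ ENNReal.ofReal (K * ρ ^ (-(n : ℝ))) := hdecay n
        _ ≤ ENNReal.ofReal (K' * ρ ^ (-(n : ℝ))) := by
            apply ENNReal.ofReal_le_ofReal
            apply mul_le_mul_of_nonneg_right (le_max_left _ _)
            positivity
        _ = ENNReal.ofReal K' * ENNReal.ofReal (ρ ^ (-(n : ℝ))) :=
            ENNReal.ofReal_mul hK'0
    have hgint : ∫⁻ ω, g ω ∂μ = M := hBmomn (n + 1)
    calc ∫⁻ ω, (Gs n ω) ^ α ∂μ = ∫⁻ ω, f ω * g ω ∂μ := by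
          apply lintegral_congr; intro ω; rw [hrw]
      _ = (∫⁻ ω, f ω ∂μ) * ∫⁻ ω, g ω ∂μ := hmul
      _ ≤ (ENNReal.ofReal K' * ENNReal.ofReal (ρ ^ (-(n : ℝ)))) * M := by
          rw [hgint]
          exact mul_le_mul_left hfint M
  -- geometric bound on the L^α norms
  have hMne : M ≠ ⊤ := hBmom.ne
  set r : ENNReal := (ENNReal.ofReal ρ⁻¹) ^ (1 / α) with hr
  have hr1 : r < 1 := by
    apply ENNReal.rpow_lt_one _ hinvα
    rw [← ENNReal.ofReal_one]
    exact ENNReal.ofReal_lt_ofReal_iff zero_lt_one |>.2 (inv_lt_one_of_one_lt₀ hρ)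
  set C : ENNReal := (ENNReal.ofReal K' * M) ^ (1 / α) with hC
  have hCne : C ≠ ⊤ := by
    apply (ENNReal.rpow_lt_top_of_nonneg hinvα.le _).ne
    exact ENNReal.mul_ne_top ENNReal.ofReal_ne_top hMne
  have hnorm_succ : ∀ m : ℕ,
      (∫⁻ ω, (Gs m ω) ^ α ∂μ) ^ (1 / α) ≤ C * r ^ m := by
    intro m
    have h1 : (∫⁻ ω, (Gs m ω) ^ α ∂μ) ^ (1 / α) ≤
        ((ENNReal.ofReal K' * ENNReal.ofReal (ρ ^ (-(m : ℝ)))) * M) ^ (1 / α) :=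
      ENNReal.rpow_le_rpow (hGint m) hinvα.le
    have h2 : ((ENNReal.ofReal K' * ENNReal.ofReal (ρ ^ (-(m : ℝ)))) * M) ^ (1 / α)
        = C * r ^ m := by
      have hof : ENNReal.ofReal (ρ ^ (-(m : ℝ))) = (ENNReal.ofReal ρ⁻¹) ^ m := by
        rw [← ENNReal.ofReal_pow (by positivity)]
        congr 1
        rw [Real.rpow_neg hρ0.le, Real.rpow_natCast, inv_pow]
      rw [hof, hC, hr]
      rw [show ENNReal.ofReal K' * (ENNReal.ofReal ρ⁻¹) ^ m * M
          = (ENNReal.ofReal K' * M) * (ENNReal.ofReal ρ⁻¹) ^ m by ring]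
      rw [ENNReal.mul_rpow_of_nonneg _ _ hinvα.le]
      congr 1
      rw [← ENNReal.rpow_natCast (ENNReal.ofReal ρ⁻¹) m, ← ENNReal.rpow_mul,
        mul_comm (m : ℝ) (1 / α), ENNReal.rpow_mul, ENNReal.rpow_natCast]
    rw [← h2]
    exact h1
  set T : ENNReal := M ^ (1 / α) + C * (1 - r)⁻¹ with hT
  have hTne : T ≠ ⊤ := by
    apply ENNReal.add_ne_top.2
    constructor
    · exact (ENNReal.rpow_lt_top_of_nonneg hinvα.le hMne).ne
    · exact ENNReal.mul_ne_top hCne (ENNReal.inv_ne_top.2 (tsub_pos_of_lt hr1).ne')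
  -- partial sums and Minkowski
  set F : ℕ → Ω → ENNReal := fun N ω => G0 ω + ∑ n ∈ Finset.range N, Gs n ω with hF
  have hFmeas : ∀ N, Measurable (F N) := by
    intro N
    exact hG0meas.add (Finset.measurable_sum _ (fun n _ => hGsmeas n))
  have hMink : ∀ N, (∫⁻ ω, (F N ω) ^ α ∂μ) ^ (1 / α) ≤ T := by
    intro N
    have key : ∀ N, (∫⁻ ω, (F N ω) ^ α ∂μ) ^ (1 / α) ≤
        M ^ (1 / α) + ∑ n ∈ Finset.range N, C * r ^ n := by
      intro N
      induction N with
      | zero =>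
        simp only [hF, Finset.range_zero, Finset.sum_empty, add_zero]
        rw [hG0int]
      | succ N ih =>
        have heq : F (N + 1) = F N + Gs N := by
          funext ω
          simp [hF, Finset.sum_range_succ, add_assoc]
        have hstep : (∫⁻ ω, ((F N + Gs N) ω) ^ α ∂μ) ^ (1 / α) ≤
            (∫⁻ ω, (F N ω) ^ α ∂μ) ^ (1 / α) + (∫⁻ ω, (Gs N ω) ^ α ∂μ) ^ (1 / α) :=
          ENNReal.lintegral_Lp_add_le (hFmeas N).aemeasurable
            (hGsmeas N).aemeasurable hα
        rw [heq, Finset.sum_range_succ, ← add_assoc]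
        exact le_trans hstep (add_le_add ih (hnorm_succ N))
    refine le_trans (key N) ?_
    rw [hT]
    apply add_le_add_right
    calc ∑ n ∈ Finset.range N, C * r ^ n
        ≤ ∑' n : ℕ, C * r ^ n := ENNReal.sum_le_tsum _
      _ = C * (1 - r)⁻¹ := by rw [ENNReal.tsum_mul_left, ENNReal.tsum_geometric]
  have hFint : ∀ N, ∫⁻ ω, (F N ω) ^ α ∂μ ≤ T ^ α := by
    intro N
    have := ENNReal.rpow_le_rpow (hMink N) hαpos.le
    rwa [← ENNReal.rpow_mul, one_div_mul_cancel hαne, ENNReal.rpow_one] at this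
  -- monotone convergence
  have hmono : Monotone F := by
    intro N N' hNN ω
    exact add_le_add_right (Finset.sum_le_sum_of_subset (Finset.range_subset_range.2 hNN)) _
  have hsup : ∀ ω, (G0 ω + ∑' n, Gs n ω) ^ α = ⨆ N, (F N ω) ^ α := by
    intro ω
    have h1 : G0 ω + ∑' n, Gs n ω = ⨆ N, F N ω := by
      rw [ENNReal.tsum_eq_iSup_nat, ENNReal.add_iSup]
    rw [h1]
    exact (ENNReal.orderIsoRpow α hαpos).map_iSup _
  have hint_sup : ∫⁻ ω, (G0 ω + ∑' n, Gs n ω) ^ α ∂μ ≤ T ^ α := by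
    calc ∫⁻ ω, (G0 ω + ∑' n, Gs n ω) ^ α ∂μ = ∫⁻ ω, ⨆ N, (F N ω) ^ α ∂μ := by
          apply lintegral_congr; intro ω; exact hsup ω
      _ = ⨆ N, ∫⁻ ω, (F N ω) ^ α ∂μ := by
          apply lintegral_iSup
          · intro N; exact (hFmeas N).pow_const _
          · intro N N' hNN ω
            exact ENNReal.rpow_le_rpow (hmono hNN ω) hαpos.le
      _ ≤ T ^ α := iSup_le hFint
  -- conclude
  calc ∫⁻ ω, ENNReal.ofReal ((|B 0 ω| + ∑' n : ℕ, term n ω) ^ α) ∂μ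
      ≤ ∫⁻ ω, (G0 ω + ∑' n, Gs n ω) ^ α ∂μ := lintegral_mono hpointwise
    _ ≤ T ^ α := hint_sup
    _ < ⊤ := ENNReal.rpow_lt_top_of_nonneg hαpos.le hTne
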